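/- Let φ = (1+√5)/2, g the {0,1}-valued function with g(0)=1, g(1)=0, and g(n) = 1 - g(m) if ⌊nφ⌋ = ⌊m(φ+1)⌋ + 1 for some m, else g(n) = 1; and set b₁(n) = ⌊nφ⌋ + g(n) - 1, b₂(n) = ⌊n(φ+1)⌋ + g(n). If positive integers n, m satisfy ⌊nφ⌋ = ⌊(n-1)φ⌋ + 1 = ⌊m(φ+1)⌋ + 2, then either (i) b₁(n) = ⌊nφ⌋, b₁(n-1) = ⌊nφ⌋ - 1, and b₂(m) < b₁(n-1) < b₁(n) < b₂(m+1), or (ii) b₁(n) = ⌊nφ⌋, b₂(m) = ⌊nφ⌋ - 1, and b₁(n-1) < b₂(m) < b₁(n) < b₂(m+1). -/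

import Mathlib

noncomputable def phi : ℝ := (1 + Real.sqrt 5) / 2

/-- The recursive specification of the {0,1}-valued function g. -/
def gSpec (g : ℕ → ℕ) : Prop :=
  g 0 = 1 ∧ g 1 = 0 ∧ (∀ n, g n ≤ 1) ∧
  ∀ n : ℕ, 2 ≤ n →
    (∀ m : ℕ, ⌊(n : ℝ) * phi⌋ = ⌊(m : ℝ) * (phi + 1)⌋ + 1 → g n = 1 - g m) ∧
    ((¬ ∃ m : ℕ, ⌊(n : ℝ) * phi⌋ = ⌊(m : ℝ) * (phi + 1)⌋ + 1) → g n = 1)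

noncomputable def b1 (g : ℕ → ℕ) (n : ℕ) : ℤ := ⌊(n : ℝ) * phi⌋ + g n - 1

noncomputable def b2 (g : ℕ → ℕ) (n : ℕ) : ℤ := ⌊(n : ℝ) * (phi + 1)⌋ + g n

lemma phi_gt : (1.61 : ℝ) < phi := by
  have h := Real.sq_sqrt (by norm_num : (0:ℝ) ≤ 5)
  have h2 := Real.sqrt_nonneg 5
  unfold phi
  nlinarith

lemma phi_lt : phi < (1.62 : ℝ) := by
  have h := Real.sq_sqrt (by norm_num : (0:ℝ) ≤ 5)
  have h2 := Real.sqrt_nonneg 5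
  unfold phi
  nlinarith

lemma phi_sq : phi ^ 2 = phi + 1 := by
  have h := Real.sq_sqrt (by norm_num : (0:ℝ) ≤ 5)
  unfold phi
  nlinarith

lemma irrational_phi : Irrational phi := by
  have h5 : Irrational (Real.sqrt 5) := (by norm_num : Nat.Prime 5).irrational_sqrt
  have h2 : Irrational (((1:ℤ):ℝ) + Real.sqrt 5) := h5.intCast_add 1
  have h3 : Irrational ((((1:ℤ):ℝ) + Real.sqrt 5) / ((2:ℕ):ℝ)) := h2.div_natCast (by norm_num)
  have he : phi = (((1:ℤ):ℝ) + Real.sqrt 5) / ((2:ℕ):ℝ) := by unfold phi; push_cast; ring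
  rwa [he]

lemma irr_nat_mul_phi (k : ℕ) (hk : k ≠ 0) : Irrational ((k : ℝ) * phi) :=
  irrational_phi.natCast_mul hk

theorem stmt14 (g : ℕ → ℕ) (hg : gSpec g) (n m : ℕ) (hn : 1 ≤ n) (hm : 1 ≤ m)
    (h1 : ⌊(n : ℝ) * phi⌋ = ⌊((n - 1 : ℕ) : ℝ) * phi⌋ + 1)
    (h2 : ⌊(n : ℝ) * phi⌋ = ⌊(m : ℝ) * (phi + 1)⌋ + 2) :
    (b1 g n = ⌊(n : ℝ) * phi⌋ ∧ b1 g (n - 1) = ⌊(n : ℝ) * phi⌋ - 1 ∧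
      b2 g m < b1 g (n - 1) ∧ b1 g (n - 1) < b1 g n ∧ b1 g n < b2 g (m + 1)) ∨
    (b1 g n = ⌊(n : ℝ) * phi⌋ ∧ b2 g m = ⌊(n : ℝ) * phi⌋ - 1 ∧
      b1 g (n - 1) < b2 g m ∧ b2 g m < b1 g n ∧ b1 g n < b2 g (m + 1)) := by
  obtain ⟨hg0, hg1, hle, hrec⟩ := hg
  have hp1 := phi_gt
  have hp2 := phi_lt
  have hpsq := phi_sq
  have hm1 : (1:ℝ) ≤ (m:ℝ) := by exact_mod_cast hm
  -- ⌊m(φ+1)⌋ ≥ 2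
  have hmf : (2:ℤ) ≤ ⌊(m : ℝ) * (phi + 1)⌋ := by
    apply Int.le_floor.2
    push_cast
    nlinarith
  -- n ≥ 3
  have hn3 : 3 ≤ n := by
    by_contra h
    push_neg at h
    interval_cases n
    · have hf : ⌊((1:ℕ) : ℝ) * phi⌋ = 1 := by
        rw [Int.floor_eq_iff]
        push_cast
        constructor <;> linarith
      omega
    · have hf : ⌊((2:ℕ) : ℝ) * phi⌋ = 3 := by
        rw [Int.floor_eq_iff]
        push_cast
        constructor <;> linarith
      omega
  -- monotonicity gap for the (φ+1) Beatty sequence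
  have gap : ∀ k : ℕ, ⌊(k : ℝ) * (phi + 1)⌋ + 2 ≤ ⌊((k:ℝ) + 1) * (phi + 1)⌋ := by
    intro k
    apply Int.le_floor.2
    have := Int.floor_le ((k : ℝ) * (phi + 1))
    push_cast
    nlinarith
  -- g n = 1
  have hgn : g n = 1 := by
    apply (hrec n (by omega)).2
    rintro ⟨m', hm'⟩
    have hkey : ⌊(m' : ℝ) * (phi + 1)⌋ = ⌊(m : ℝ) * (phi + 1)⌋ + 1 := by omega
    rcases le_or_gt m' m with h | h
    · have : ⌊(m' : ℝ) * (phi + 1)⌋ ≤ ⌊(m : ℝ) * (phi + 1)⌋ := by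
        apply Int.floor_le_floor
        have : (m' : ℝ) ≤ (m : ℝ) := by exact_mod_cast h
        nlinarith
      omega
    · have hge : ((m:ℝ) + 1) ≤ (m' : ℝ) := by exact_mod_cast h
      have := gap m
      have hmono : ⌊((m:ℝ) + 1) * (phi + 1)⌋ ≤ ⌊(m' : ℝ) * (phi + 1)⌋ := by
        apply Int.floor_le_floor
        nlinarith
      omega
  -- g (n-1) = 1 - g m
  have hprev : ⌊((n - 1 : ℕ) : ℝ) * phi⌋ = ⌊(m : ℝ) * (phi + 1)⌋ + 1 := by omega
  have hgn1 : g (n - 1) = 1 - g m := (hrec (n - 1) (by omega)).1 m hprev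
  -- Beatty disjointness: ⌊(m+1)(φ+1)⌋ ≠ ⌊nφ⌋
  have hne : ⌊((m:ℝ) + 1) * (phi + 1)⌋ ≠ ⌊(n : ℝ) * phi⌋ := by
    intro heq
    set N := ⌊(n : ℝ) * phi⌋ with hN
    have hirr_n : ((n:ℝ) * phi) ≠ (N : ℝ) := (irr_nat_mul_phi n (by omega)).ne_int N
    have h1a : (N : ℝ) < (n:ℝ) * phi := lt_of_le_of_ne (Int.floor_le _) (Ne.symm hirr_n)
    have h1b : (n:ℝ) * phi < N + 1 := Int.lt_floor_add_one _
    have hirr_m : (((m:ℝ) + 1) * (phi + 1)) ≠ (N : ℝ) := by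
      intro habs
      have : Irrational (((m:ℝ) + 1) * (phi + 1)) := by
        have h1 : Irrational (((m+1 : ℕ):ℝ) * phi) := irr_nat_mul_phi (m+1) (by omega)
        have h2 : Irrational (((m+1 : ℕ):ℝ) * phi + ((m+1 : ℕ):ℤ)) := h1.add_intCast _
        have : ((m:ℝ) + 1) * (phi + 1) = ((m+1 : ℕ):ℝ) * phi + ((m+1 : ℕ):ℤ) := by
          push_cast; ring
        rwa [this]
      exact this.ne_int N habs
    have h2a : (N : ℝ) < ((m:ℝ) + 1) * (phi + 1) := by
      rw [← heq] at hirr_m ⊢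
      exact lt_of_le_of_ne (Int.floor_le _) (Ne.symm hirr_m)
    have h2b : ((m:ℝ) + 1) * (phi + 1) < N + 1 := by
      rw [← heq]; exact Int.lt_floor_add_one _
    have hNpos : (0:ℝ) < N := by
      have : (3:ℤ) ≤ N := by omega
      exact_mod_cast lt_of_lt_of_le (by norm_num) this
    -- N(φ-1) < n < (N+1)(φ-1), N(2-φ) < m+1 < (N+1)(2-φ)
    have hpos1 : (0:ℝ) < phi - 1 := by linarith
    have hpos2 : (0:ℝ) < 2 - phi := by linarith
    have id1 : (n:ℝ) * phi * (phi - 1) = n := by linear_combination (n:ℝ) * hpsq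
    have id2 : ((m:ℝ) + 1) * (phi + 1) * (2 - phi) = (m:ℝ) + 1 := by
      linear_combination (-(m:ℝ) - 1) * hpsq
    have e1 : (N:ℝ) * (phi - 1) < n := by
      have := mul_lt_mul_of_pos_right h1a hpos1
      linarith
    have e2 : (n:ℝ) < ((N:ℝ) + 1) * (phi - 1) := by
      have := mul_lt_mul_of_pos_right h1b hpos1
      linarith
    have e3 : (N:ℝ) * (2 - phi) < (m:ℝ) + 1 := by
      have := mul_lt_mul_of_pos_right h2a hpos2
      linarith
    have e4 : ((m:ℝ) + 1) < ((N:ℝ) + 1) * (2 - phi) := by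
      have := mul_lt_mul_of_pos_right h2b hpos2
      linarith
    have low : (N:ℝ) < (n:ℝ) + (m:ℝ) + 1 := by linarith
    have high : (n:ℝ) + (m:ℝ) + 1 < (N:ℝ) + 1 := by linarith
    have lowZ : N < (n:ℤ) + m + 1 := by exact_mod_cast low
    have highZ : (n:ℤ) + m + 1 < N + 1 := by exact_mod_cast high
    omega
  have hb2m1 : ⌊(n : ℝ) * phi⌋ + 1 ≤ ⌊((m:ℝ) + 1) * (phi + 1)⌋ := by
    have hgap := gap m
    omega
  have hgm := hle m
  have hgm1nonneg : (0:ℤ) ≤ (g (m+1) : ℤ) := Int.ofNat_nonneg _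
  rcases Nat.lt_or_ge (g m) 1 with hc | hc
  · -- g m = 0 : case (i)
    have hgm0 : g m = 0 := by omega
    have hgn1' : g (n-1) = 1 := by omega
    left
    refine ⟨?_, ?_, ?_, ?_, ?_⟩ <;>
      simp only [b1, b2, hgn, hgn1', hgm0] <;> push_cast <;> omega
  · -- g m = 1 : case (ii)
    have hgm0 : g m = 1 := by omega
    have hgn1' : g (n-1) = 0 := by omega
    right
    refine ⟨?_, ?_, ?_, ?_, ?_⟩ <;>
      simp only [b1, b2, hgn, hgn1', hgm0] <;> push_cast <;> omega
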